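/- Let 1 ≤ p₁ < p₂ < q < ∞ and v, w ∈ ℕ with q/p₂ < v/w. With x the sequence defined by x_j = 1 iff j ∈ {0,1} ∪ ⋃_{n≥1} S_n where S_n = {1 + 2^v + ⋯ + 2^{(n−1)v} + j·2^{nw} : j = 1, …, 2^{n(v−w)}}, we have for every n ∈ ℕ₀, writing β_n = 1 + 2^v + ⋯ + 2^{nv}, the lower bound (β_n + 1)^{1/q − 1/p₂} (Σ_{j=0}^{β_n} |x_j|^{p₂})^{1/p₂} > 3^{1/q − 1/p₂} · 2^{n(v/q − w/p₂)}; in particular ‖x‖*_{ℓ^{p₂}_q} = ∞. -/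

import Mathlib

open scoped ENNReal BigOperators

/-- Discrete Morrey norm over symmetric index sets `S_{m,N} = {m-N, …, m+N}`. -/
noncomputable def dnorm (p q : ℝ) (x : ℤ → ℝ) : ℝ≥0∞ :=
  ⨆ (m : ℤ) (N : ℕ), ((2 * N + 1 : ℝ≥0∞) ^ (1 / q - 1 / p)) *
    ENNReal.ofReal ((∑ j ∈ Finset.Icc (m - N) (m + N), |x j| ^ p) ^ (1 / p))

/-- Discrete Morrey norm over arbitrary index intervals `S*_{k,n} = {k, …, k+n}`. -/
noncomputable def dnormStar (p q : ℝ) (x : ℤ → ℝ) : ℝ≥0∞ :=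
  ⨆ (k : ℤ) (n : ℕ), ((n + 1 : ℝ≥0∞) ^ (1 / q - 1 / p)) *
    ENNReal.ofReal ((∑ j ∈ Finset.Icc k (k + n), |x j| ^ p) ^ (1 / p))

/-- Morrey norm on the real line. -/
noncomputable def mnormR (p q : ℝ) (f : ℝ → ℝ) : ℝ≥0∞ :=
  ⨆ (a : ℝ) (r : Set.Ioi (0 : ℝ)),
    ENNReal.ofReal ((2 * r.1) ^ (1 / q - 1 / p) *
      (∫ t in (a - r.1)..(a + r.1), |f t| ^ p) ^ (1 / p))

/-- The step function `x̃(t) = ∑_j x_j χ_{[j,j+1)}(t)`, i.e. `x̃(t) = x ⌊t⌋`. -/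
noncomputable def step (x : ℤ → ℝ) : ℝ → ℝ := fun t => x ⌊t⌋

/-- The set `S_n = {1 + 2^v + ⋯ + 2^{(n-1)v} + j·2^{nw} : j = 1, …, 2^{n(v-w)}}`. -/
def Sn (v w n : ℕ) : Set ℤ :=
  {m | ∃ j : ℕ, 1 ≤ j ∧ j ≤ 2 ^ (n * (v - w)) ∧
    m = ((∑ i ∈ Finset.range n, 2 ^ (i * v) : ℕ) : ℤ) + (j : ℤ) * 2 ^ (n * w)}

/-- The sequence with `x_j = 1` iff `j ∈ {0,1} ∪ ⋃_{n≥1} S_n`, `x_j = 0` otherwise. -/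
noncomputable def xseq (v w : ℕ) : ℤ → ℝ :=
  Set.indicator (({0, 1} : Set ℤ) ∪ ⋃ n ∈ Set.Ici 1, Sn v w n) 1

/-- `β_n = 1 + 2^v + ⋯ + 2^{nv}`. -/
def beta (v n : ℕ) : ℕ := ∑ i ∈ Finset.range (n + 1), 2 ^ (i * v)

lemma beta_le (v n : ℕ) (hv : 1 ≤ v) : beta v n + 1 ≤ 2 ^ (n * v + 1) := by
  induction n with
  | zero => simp [beta]
  | succ n ih =>
    have h1 : beta v (n+1) = beta v n + 2 ^ ((n+1) * v) := by
      simp [beta, Finset.sum_range_succ]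
    have h2 : 2 ^ (n * v + 1) ≤ 2 ^ ((n+1) * v) := by
      apply Nat.pow_le_pow_right (by norm_num)
      nlinarith
    calc beta v (n+1) + 1 = (beta v n + 1) + 2 ^ ((n+1)*v) := by omega
    _ ≤ 2 ^ ((n+1)*v) + 2^((n+1)*v) := by omega
    _ = 2 ^ ((n+1)*v + 1) := by ring

lemma key_sum (v w : ℕ) (hwv : w < v) (p : ℝ) (n : ℕ) :
    (1 + 2 ^ (n * (v - w)) : ℝ) ≤ ∑ j ∈ Finset.Icc (0 : ℤ) (beta v n), |xseq v w j| ^ p := by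
  classical
  set c : ℤ := ((∑ i ∈ Finset.range n, 2 ^ (i * v) : ℕ) : ℤ) with hc
  have hc0 : 0 ≤ c := by positivity
  set f : ℕ → ℤ := fun j => c + (j : ℤ) * 2 ^ (n * w) with hf
  set T : Finset ℤ := insert 0 ((Finset.Icc 1 (2 ^ (n * (v - w)))).image f) with hT
  have hfinj : Function.Injective f := by
    intro a b hab
    simp only [hf, add_right_inj] at hab
    have h2 : (0:ℤ) < 2 ^ (n*w) := by positivity
    exact_mod_cast mul_right_cancel₀ (ne_of_gt h2) hab
  have h0T : (0 : ℤ) ∉ (Finset.Icc 1 (2 ^ (n * (v - w)))).image f := by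
    simp only [Finset.mem_image, Finset.mem_Icc, not_exists]
    rintro j ⟨⟨hj1, hj2⟩, h⟩
    have hpos : (0:ℤ) < c + (j:ℤ) * 2 ^ (n*w) := by
      have h1 : (1:ℤ) ≤ (j:ℤ) := by exact_mod_cast hj1
      nlinarith [pow_pos (show (0:ℤ) < 2 by norm_num) (n*w)]
    simp only [hf] at h
    exact absurd h hpos.ne'
  have hcard : T.card = 1 + 2 ^ (n * (v - w)) := by
    rw [hT, Finset.card_insert_of_notMem h0T,
      Finset.card_image_of_injective _ hfinj, Nat.card_Icc]
    generalize 2 ^ (n * (v - w)) = M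
    omega
  have hmem : ∀ m ∈ T, xseq v w m = 1 := by
    intro m hm
    have hmm : m ∈ ({0, 1} : Set ℤ) ∪ ⋃ k ∈ Set.Ici 1, Sn v w k := by
      rw [hT] at hm
      rcases Finset.mem_insert.mp hm with h | h
      · left; simp [h]
      · simp only [Finset.mem_image, Finset.mem_Icc] at h
        obtain ⟨j, ⟨hj1, hj2⟩, rfl⟩ := h
        rcases Nat.eq_zero_or_pos n with rfl | hn
        · left
          have hc' : c = 0 := by simp [hc]
          have hj : j = 1 := by simp at hj2; omega
          subst hj
          simp [hf, hc']
        · right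
          simp only [Set.mem_iUnion]
          exact ⟨n, hn, j, hj1, hj2, rfl⟩
    simp only [xseq]
    rw [Set.indicator_of_mem (by simpa using hmm)]
    rfl
  have hsub : T ⊆ Finset.Icc (0 : ℤ) (beta v n) := by
    intro m hm
    rw [Finset.mem_Icc]
    rw [hT] at hm
    rcases Finset.mem_insert.mp hm with h | h
    · subst h
      exact ⟨le_refl _, by positivity⟩
    · simp only [Finset.mem_image, Finset.mem_Icc] at h
      obtain ⟨j, ⟨hj1, hj2⟩, rfl⟩ := h
      have key : (∑ i ∈ Finset.range n, 2 ^ (i * v) : ℕ) + j * 2 ^ (n * w) ≤ beta v n := by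
        have h3 : j * 2 ^ (n*w) ≤ 2 ^ (n*(v-w)) * 2 ^ (n*w) := Nat.mul_le_mul_right _ hj2
        have h4 : 2 ^ (n*(v-w)) * 2 ^ (n*w) = 2 ^ (n*v) := by
          rw [← pow_add]
          congr 1
          have hvw : v - w + w = v := Nat.sub_add_cancel hwv.le
          calc n*(v-w) + n*w = n*((v-w)+w) := by ring
          _ = n*v := by rw [hvw]
        have h5 : beta v n = (∑ i ∈ Finset.range n, 2 ^ (i * v)) + 2 ^ (n*v) := by
          simp [beta, Finset.sum_range_succ]
        omega
      have hfe : f j = (((∑ i ∈ Finset.range n, 2 ^ (i * v) : ℕ) + j * 2 ^ (n * w) : ℕ) : ℤ) := by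
        show c + (j:ℤ) * 2 ^ (n*w) = _
        rw [hc]
        push_cast
        ring
      constructor
      · show (0:ℤ) ≤ f j
        rw [hfe]; positivity
      · show f j ≤ ((beta v n : ℕ) : ℤ)
        rw [hfe]
        exact_mod_cast key
  calc (1 + 2 ^ (n * (v - w)) : ℝ) = ∑ _m ∈ T, (1:ℝ) := by
        rw [Finset.sum_const, hcard]; push_cast; ring
  _ = ∑ m ∈ T, |xseq v w m| ^ p := by
        refine Finset.sum_congr rfl fun m hm => ?_
        rw [hmem m hm]
        simp
  _ ≤ ∑ j ∈ Finset.Icc (0 : ℤ) (beta v n), |xseq v w j| ^ p := by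
        refine Finset.sum_le_sum_of_subset_of_nonneg hsub fun i _ _ => by positivity

lemma key_ineq (p q : ℝ) (hp : 0 < p) (hpq : p < q) (v w n : ℕ) (hwv : w < v) :
    (3:ℝ) ^ (1/q - 1/p) * (2:ℝ) ^ ((n:ℝ) * ((v:ℝ)/q - (w:ℝ)/p)) <
      ((beta v n : ℝ) + 1) ^ (1/q - 1/p) * (1 + (2:ℝ) ^ (n * (v - w)) : ℝ) ^ (1/p) := by
  have hq : 0 < q := hp.trans hpq
  set α : ℝ := 1/q - 1/p with hα
  have hαneg : α < 0 := by
    have h := one_div_lt_one_div_of_lt hp hpq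
    rw [hα]; linarith
  have hA : ((beta v n : ℝ) + 1) ≤ 3 * (2:ℝ) ^ ((n*v : ℕ)) := by
    have h1 : (beta v n + 1 : ℕ) ≤ 2 ^ (n*v+1) := beta_le v n (by omega)
    have h2 : ((beta v n : ℝ) + 1) ≤ (2:ℝ) ^ (n*v+1) := by exact_mod_cast h1
    have h3 : (2:ℝ) ^ (n*v+1) = 2 * 2 ^ (n*v) := by ring
    nlinarith [pow_pos (show (0:ℝ) < 2 by norm_num) (n*v)]
  have hbpos : (0:ℝ) < (beta v n : ℝ) + 1 := by positivity
  have hB : (3 * (2:ℝ) ^ ((n*v : ℕ))) ^ α ≤ ((beta v n : ℝ) + 1) ^ α :=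
    Real.rpow_le_rpow_of_nonpos hbpos hA hαneg.le
  have hC : ((2:ℝ) ^ (n*(v-w) : ℕ)) ^ (1/p) < (1 + (2:ℝ) ^ (n*(v-w) : ℕ)) ^ (1/p) := by
    apply Real.rpow_lt_rpow (by positivity) (by linarith) (by positivity)
  have hprodpos : (0:ℝ) < (3 * (2:ℝ) ^ ((n*v : ℕ))) ^ α := by positivity
  have step : (3 * (2:ℝ) ^ ((n*v : ℕ))) ^ α * ((2:ℝ) ^ (n*(v-w) : ℕ)) ^ (1/p) <
      ((beta v n : ℝ) + 1) ^ α * (1 + (2:ℝ) ^ (n*(v-w) : ℕ)) ^ (1/p) := by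
    have hpos2 : (0:ℝ) < (1 + (2:ℝ) ^ (n*(v-w) : ℕ)) ^ (1/p) := by positivity
    calc (3 * (2:ℝ) ^ ((n*v : ℕ))) ^ α * ((2:ℝ) ^ (n*(v-w) : ℕ)) ^ (1/p)
        < (3 * (2:ℝ) ^ ((n*v : ℕ))) ^ α * (1 + (2:ℝ) ^ (n*(v-w) : ℕ)) ^ (1/p) :=
          mul_lt_mul_of_pos_left hC hprodpos
      _ ≤ ((beta v n : ℝ) + 1) ^ α * (1 + (2:ℝ) ^ (n*(v-w) : ℕ)) ^ (1/p) :=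
          mul_le_mul_of_nonneg_right hB hpos2.le
  have hLHS : (3:ℝ) ^ α * (2:ℝ) ^ ((n:ℝ) * ((v:ℝ)/q - (w:ℝ)/p)) =
      (3 * (2:ℝ) ^ ((n*v : ℕ))) ^ α * ((2:ℝ) ^ (n*(v-w) : ℕ)) ^ (1/p) := by
    rw [Real.mul_rpow (by norm_num) (by positivity)]
    rw [← Real.rpow_natCast (2:ℝ) (n*v), ← Real.rpow_natCast (2:ℝ) (n*(v-w))]
    rw [← Real.rpow_mul (by norm_num), ← Real.rpow_mul (by norm_num)]
    rw [mul_assoc, ← Real.rpow_add (by norm_num)]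
    have hexp : ((n*v : ℕ):ℝ) * α + ((n*(v-w) : ℕ):ℝ) * (1/p) = (n:ℝ) * ((v:ℝ)/q - (w:ℝ)/p) := by
      rw [hα]
      push_cast [Nat.cast_sub hwv.le]
      field_simp
      ring
    rw [hexp]
  rw [hLHS]
  exact step

theorem stmt8 (p₁ p₂ q : ℝ) (hp₁ : 1 ≤ p₁) (h12 : p₁ < p₂) (h2q : p₂ < q)
    (v w : ℕ) (hw : 0 < w) (h₁ : q / p₂ < (v : ℝ) / w) :
    (∀ n : ℕ,
      ((beta v n : ℝ≥0∞) + 1) ^ (1 / q - 1 / p₂) *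
          ENNReal.ofReal ((∑ j ∈ Finset.Icc (0 : ℤ) (beta v n), |xseq v w j| ^ p₂) ^ (1 / p₂))
        > ENNReal.ofReal ((3 : ℝ) ^ (1 / q - 1 / p₂) *
            (2 : ℝ) ^ ((n : ℝ) * ((v : ℝ) / q - (w : ℝ) / p₂)))) ∧
    dnormStar p₂ q (xseq v w) = ⊤ := by
  have hp₂ : (0:ℝ) < p₂ := by linarith
  have hq : (0:ℝ) < q := by linarith
  have hw' : (0:ℝ) < (w:ℝ) := by exact_mod_cast hw
  have hqp : (1:ℝ) < q / p₂ := (one_lt_div hp₂).mpr h2q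
  have hwv : w < v := by
    have h2 : (1:ℝ) < (v:ℝ) / (w:ℝ) := hqp.trans h₁
    have h3 : (w:ℝ) < (v:ℝ) := by
      rw [lt_div_iff₀ hw'] at h2; linarith
    exact_mod_cast h3
  have hc' : (0:ℝ) < (v:ℝ)/q - (w:ℝ)/p₂ := by
    rw [div_lt_div_iff₀ hp₂ hw'] at h₁
    rw [sub_pos, div_lt_div_iff₀ hp₂ hq]
    linarith
  -- part 1
  have part1 : ∀ n : ℕ,
      ((beta v n : ℝ≥0∞) + 1) ^ (1 / q - 1 / p₂) *
          ENNReal.ofReal ((∑ j ∈ Finset.Icc (0 : ℤ) (beta v n), |xseq v w j| ^ p₂) ^ (1 / p₂))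
        > ENNReal.ofReal ((3 : ℝ) ^ (1 / q - 1 / p₂) *
            (2 : ℝ) ^ ((n : ℝ) * ((v : ℝ) / q - (w : ℝ) / p₂))) := by
    intro n
    set S : ℝ := ∑ j ∈ Finset.Icc (0 : ℤ) (beta v n), |xseq v w j| ^ p₂ with hS
    have hSnn : (1 + 2 ^ (n * (v - w)) : ℝ) ≤ S := key_sum v w hwv p₂ n
    have hS0 : (0:ℝ) ≤ S := by positivity
    have hb1 : ((beta v n : ℝ≥0∞) + 1) = ENNReal.ofReal ((beta v n : ℝ) + 1) := by
      rw [ENNReal.ofReal_add (by positivity) zero_le_one]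
      simp
    rw [hb1, ENNReal.ofReal_rpow_of_pos (by positivity),
      ← ENNReal.ofReal_mul (by positivity)]
    rw [gt_iff_lt, ENNReal.ofReal_lt_ofReal_iff_of_nonneg (by positivity)]
    have step1 : (3:ℝ) ^ (1/q - 1/p₂) * (2:ℝ) ^ ((n:ℝ) * ((v:ℝ)/q - (w:ℝ)/p₂)) <
        ((beta v n : ℝ) + 1) ^ (1/q - 1/p₂) * (1 + (2:ℝ) ^ (n * (v - w)) : ℝ) ^ (1/p₂) :=
      key_ineq p₂ q hp₂ h2q v w n hwv
    have step2 : (1 + (2:ℝ) ^ (n * (v - w)) : ℝ) ^ (1/p₂) ≤ S ^ (1/p₂) :=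
      Real.rpow_le_rpow (by positivity) hSnn (by positivity)
    calc (3:ℝ) ^ (1/q - 1/p₂) * (2:ℝ) ^ ((n:ℝ) * ((v:ℝ)/q - (w:ℝ)/p₂))
        < ((beta v n : ℝ) + 1) ^ (1/q - 1/p₂) * (1 + (2:ℝ) ^ (n * (v - w)) : ℝ) ^ (1/p₂) := step1
      _ ≤ ((beta v n : ℝ) + 1) ^ (1/q - 1/p₂) * S ^ (1/p₂) :=
          mul_le_mul_of_nonneg_left step2 (by positivity)
  refine ⟨part1, ?_⟩
  -- part 2
  have hterm : ∀ n : ℕ,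
      ENNReal.ofReal ((3 : ℝ) ^ (1 / q - 1 / p₂) *
          (2 : ℝ) ^ ((n : ℝ) * ((v : ℝ) / q - (w : ℝ) / p₂))) < dnormStar p₂ q (xseq v w) := by
    intro n
    refine lt_of_lt_of_le (part1 n) ?_
    have hle : ((beta v n : ℝ≥0∞) + 1) ^ (1 / q - 1 / p₂) *
          ENNReal.ofReal ((∑ j ∈ Finset.Icc ((0:ℤ)) ((0:ℤ) + (beta v n : ℕ)),
            |xseq v w j| ^ p₂) ^ (1 / p₂)) ≤ dnormStar p₂ q (xseq v w) := by
      exact le_iSup₂_of_le (0 : ℤ) (beta v n) (le_refl _)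
    simpa using hle
  by_contra hne
  set D := dnormStar p₂ q (xseq v w) with hD
  have hbound : ∀ n : ℕ,
      (3 : ℝ) ^ (1 / q - 1 / p₂) * (2 : ℝ) ^ ((n : ℝ) * ((v : ℝ) / q - (w : ℝ) / p₂)) ≤
        D.toReal := by
    intro n
    have h := (hterm n).le
    have := ENNReal.toReal_mono hne h
    rwa [ENNReal.toReal_ofReal (by positivity)] at this
  have hT : Filter.Tendsto
      (fun n : ℕ => (3 : ℝ) ^ (1 / q - 1 / p₂) * (2 : ℝ) ^ ((n : ℝ) * ((v : ℝ) / q - (w : ℝ) / p₂)))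
      Filter.atTop Filter.atTop := by
    have h1 : (1:ℝ) < (2:ℝ) ^ ((v:ℝ)/q - (w:ℝ)/p₂) :=
      Real.one_lt_rpow_iff_of_pos (by norm_num) |>.mpr (Or.inl ⟨by norm_num, hc'⟩)
    have h2 : Filter.Tendsto (fun n : ℕ => ((2:ℝ) ^ ((v:ℝ)/q - (w:ℝ)/p₂)) ^ n)
        Filter.atTop Filter.atTop := tendsto_pow_atTop_atTop_of_one_lt h1
    have heq : ∀ n : ℕ, ((2:ℝ) ^ ((v:ℝ)/q - (w:ℝ)/p₂)) ^ n
        = (2:ℝ) ^ ((n:ℝ) * ((v:ℝ)/q - (w:ℝ)/p₂)) := by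
      intro n
      rw [← Real.rpow_natCast ((2:ℝ) ^ ((v:ℝ)/q - (w:ℝ)/p₂)) n,
        ← Real.rpow_mul (by norm_num), mul_comm]
    have h3 : Filter.Tendsto (fun n : ℕ => (2:ℝ) ^ ((n:ℝ) * ((v:ℝ)/q - (w:ℝ)/p₂)))
        Filter.atTop Filter.atTop := by
      simpa [heq] using h2
    exact h3.const_mul_atTop (by positivity)
  obtain ⟨n, hn⟩ := (hT.eventually_ge_atTop (D.toReal + 1)).exists
  linarith [hbound n]
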